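/- Rotating relative equilibria of the damped elastic pendulum: let m, k, ℓ, g₀ > 0, ρ₀ > 0, z₀ ∈ ℝ, ω ∈ ℝ, φ₀ ∈ ℝ, and set R = Real.sqrt(ρ₀² + z₀²). Assume the equilibrium conditions m ω² = k (1 − ℓ/R) and k (1 − ℓ/R) z₀ = −m g₀. Define q(t) = (ρ₀ cos(ω t + φ₀), ρ₀ sin(ω t + φ₀), z₀) and p(t) = (−m ρ₀ ω sin(ω t + φ₀), m ρ₀ ω cos(ω t + φ₀), 0). Then q(t) ≠ 0 for all t, ⟨q(t), p(t)⟩ = 0 for all t, and for EVERY ε ≥ 0 the curve (q, p) is a solution of the damped elastic pendulum equations q' = p/m, p' = −k(1 − ℓ/‖q‖) q + (0,0,−m g₀) − (ε/(m‖q‖²)) ⟨q, p⟩ q; that is, uniform rotation about the vertical axis with angular velocity ω is a relative equilibrium of the damped system. -/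

import Mathlib

open scoped RealInnerProductSpace

/-- The gravity vector `(0, 0, -m g₀)`. -/
def grav (m g₀ : ℝ) : EuclideanSpace ℝ (Fin 3) := WithLp.toLp 2 ![0, 0, -(m * g₀)]

/-- The configuration of a uniformly rotating pendulum:
`q(t) = (ρ₀ cos(ω t + φ₀), ρ₀ sin(ω t + φ₀), z₀)`. -/
noncomputable def qRE (ρ₀ z₀ ω φ₀ : ℝ) (t : ℝ) : EuclideanSpace ℝ (Fin 3) :=
  WithLp.toLp 2 ![ρ₀ * Real.cos (ω * t + φ₀), ρ₀ * Real.sin (ω * t + φ₀), z₀]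

/-- The momentum of a uniformly rotating pendulum:
`p(t) = (-m ρ₀ ω sin(ω t + φ₀), m ρ₀ ω cos(ω t + φ₀), 0)`. -/
noncomputable def pRE (m ρ₀ ω φ₀ : ℝ) (t : ℝ) : EuclideanSpace ℝ (Fin 3) :=
  WithLp.toLp 2 ![-(m * ρ₀ * ω) * Real.sin (ω * t + φ₀), m * ρ₀ * ω * Real.cos (ω * t + φ₀), 0]

lemma hasDerivAt_vec3 (f g h : ℝ → ℝ) (f' g' h' t : ℝ)
    (hf : HasDerivAt f f' t) (hg : HasDerivAt g g' t) (hh : HasDerivAt h h' t) :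
    HasDerivAt (𝕜 := ℝ) (F := EuclideanSpace ℝ (Fin 3))
      (fun s => WithLp.toLp 2 ![f s, g s, h s]) (WithLp.toLp 2 ![f', g', h']) t := by
  have key : HasDerivAt (fun s => (![f s, g s, h s] : Fin 3 → ℝ)) ![f', g', h'] t := by
    rw [hasDerivAt_pi]; intro i; fin_cases i <;> simpa
  exact ((PiLp.continuousLinearEquiv 2 ℝ (fun _ : Fin 3 => ℝ)).symm :
    (Fin 3 → ℝ) →L[ℝ] EuclideanSpace ℝ (Fin 3)).hasFDerivAt.comp_hasDerivAt t key

/-- Rotating relative equilibria of the damped elastic pendulum: under the equilibrium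
conditions `m ω² = k (1 - ℓ/R)` and `k (1 - ℓ/R) z₀ = -m g₀` with `R = √(ρ₀² + z₀²)`,
uniform rotation about the vertical axis is, for EVERY `ε ≥ 0`, a solution of the damped
elastic pendulum equations
`q' = p/m`, `p' = -k(1 - ℓ/‖q‖) q + (0,0,-m g₀) - (ε/(m ‖q‖²)) ⟪q,p⟫ q`,
along which `q(t) ≠ 0` and `⟪q(t), p(t)⟫ = 0`. -/
theorem rotating_relative_equilibrium
    (m k ℓ g₀ ρ₀ : ℝ) (hm : 0 < m) (hk : 0 < k) (hl : 0 < ℓ) (hg : 0 < g₀)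
    (hρ : 0 < ρ₀) (z₀ ω φ₀ : ℝ)
    (R : ℝ) (hR : R = Real.sqrt (ρ₀ ^ 2 + z₀ ^ 2))
    (h1 : m * ω ^ 2 = k * (1 - ℓ / R))
    (h2 : k * (1 - ℓ / R) * z₀ = -(m * g₀)) :
    ∀ ε : ℝ, 0 ≤ ε → ∀ t : ℝ,
      qRE ρ₀ z₀ ω φ₀ t ≠ 0 ∧
      ⟪qRE ρ₀ z₀ ω φ₀ t, pRE m ρ₀ ω φ₀ t⟫ = 0 ∧
      HasDerivAt (qRE ρ₀ z₀ ω φ₀) (m⁻¹ • pRE m ρ₀ ω φ₀ t) t ∧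
      HasDerivAt (pRE m ρ₀ ω φ₀)
        ((-(k * (1 - ℓ / ‖qRE ρ₀ z₀ ω φ₀ t‖))) • qRE ρ₀ z₀ ω φ₀ t + grav m g₀
          - (ε / (m * ‖qRE ρ₀ z₀ ω φ₀ t‖ ^ 2))
              • (⟪qRE ρ₀ z₀ ω φ₀ t, pRE m ρ₀ ω φ₀ t⟫ • qRE ρ₀ z₀ ω φ₀ t)) t := by
  intro ε hε t
  have hRpos : 0 < R := by rw [hR]; positivity
  have hnorm : ‖qRE ρ₀ z₀ ω φ₀ t‖ = R := by
    rw [hR, EuclideanSpace.norm_eq]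
    congr 1
    simp [qRE, Fin.sum_univ_three, Real.norm_eq_abs, sq_abs]
    nlinarith [Real.sin_sq_add_cos_sq (ω * t + φ₀)]
  have hq0 : qRE ρ₀ z₀ ω φ₀ t ≠ 0 := by
    intro h
    rw [h, norm_zero] at hnorm; linarith
  have hinner : ⟪qRE ρ₀ z₀ ω φ₀ t, pRE m ρ₀ ω φ₀ t⟫ = 0 := by
    simp [qRE, pRE, PiLp.inner_apply, Fin.sum_univ_three]; ring
  have harg : ∀ s : ℝ, HasDerivAt (fun u => ω * u + φ₀) ω s := fun s => by
    simpa using ((hasDerivAt_id s).const_mul ω).add_const φ₀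
  have hcos : HasDerivAt (fun s => ρ₀ * Real.cos (ω * s + φ₀))
      (-(ρ₀ * ω) * Real.sin (ω * t + φ₀)) t := by
    have := ((Real.hasDerivAt_cos (ω * t + φ₀)).comp t (harg t)).const_mul ρ₀
    convert this using 1; rfl; rfl; rfl; ring
  have hsin : HasDerivAt (fun s => ρ₀ * Real.sin (ω * s + φ₀))
      (ρ₀ * ω * Real.cos (ω * t + φ₀)) t := by
    have := ((Real.hasDerivAt_sin (ω * t + φ₀)).comp t (harg t)).const_mul ρ₀
    convert this using 1; rfl; rfl; rfl; ring
  refine ⟨hq0, hinner, ?_, ?_⟩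
  · have hd := hasDerivAt_vec3 _ _ _ _ _ _ t hcos hsin (hasDerivAt_const t z₀)
    convert hd using 1
    · rfl
    ext i
    fin_cases i <;>
      simp [pRE, PiLp.smul_apply] <;> field_simp <;> ring
  · have hc : HasDerivAt (fun s => -(m * ρ₀ * ω) * Real.sin (ω * s + φ₀))
        (-(m * ρ₀ * ω ^ 2) * Real.cos (ω * t + φ₀)) t := by
      have := ((Real.hasDerivAt_sin (ω * t + φ₀)).comp t (harg t)).const_mul (-(m * ρ₀ * ω))
      convert this using 1; rfl; rfl; rfl; ring
    have hs : HasDerivAt (fun s => m * ρ₀ * ω * Real.cos (ω * s + φ₀))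
        (-(m * ρ₀ * ω ^ 2) * Real.sin (ω * t + φ₀)) t := by
      have := ((Real.hasDerivAt_cos (ω * t + φ₀)).comp t (harg t)).const_mul (m * ρ₀ * ω)
      convert this using 1; rfl; rfl; rfl; ring
    have hd := hasDerivAt_vec3 _ _ _ _ _ _ t hc hs (hasDerivAt_const t (0 : ℝ))
    convert hd using 1
    · rfl
    rw [hinner, hnorm]
    ext i
    fin_cases i <;>
      simp [qRE, grav, PiLp.smul_apply, PiLp.add_apply, PiLp.sub_apply] <;>
      [skip; skip; linarith] <;> rw [← h1] <;> ring
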